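/- arXiv:2007.11846 — 4 statements merged into one kernel-verified Lean document; each statement's English description precedes it below -/
import Mathlib

section
/- Let M = [[A, b],[bᵀ, c]] be a real symmetric positive semidefinite (n+1)×(n+1) matrix, where A is a real symmetric n×n matrix, b ∈ ℝⁿ and c ∈ ℝ. Then rank M = rank A if and only if the generalized Schur complement M/A = c − bᵀ A⁺ b equals 0; otherwise rank M = rank A + 1. -/
open Matrix MeasureTheory

noncomputable section

attribute [local instance] Classical.propDecidable

/-- Hankel matrix of the sequence `(β a, β (a+1), …, β (a+2m))`. -/
def Hmat (β : ℕ → ℝ) (a m : ℕ) : Matrix (Fin (m + 1)) (Fin (m + 1)) ℝ :=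
  Matrix.of fun i j => β (a + i + j)

/-- `j`-th column of the Hankel matrix of `(β a, …, β (a+2m))`. -/
def Hcol (β : ℕ → ℝ) (a m : ℕ) (j : ℕ) : Fin (m + 1) → ℝ := fun ℓ => β (a + j + ℓ)

/-- The rank of the sequence `(β a, …, β (a+2m))`. -/
def seqRank (β : ℕ → ℝ) (a m : ℕ) : ℕ :=
  if IsUnit (Hmat β a m).det then m + 1
  else sInf {i : ℕ | Hcol β a m i ∈ Submodule.span ℝ (Hcol β a m '' Set.Iio i)}

/-- Moore–Penrose pseudoinverse of a real matrix. -/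
def pinv {n m : Type*} [Fintype n] [Fintype m] (A : Matrix n m ℝ) : Matrix m n ℝ :=
  if h : ∃ B : Matrix m n ℝ,
      A * B * A = A ∧ B * A * B = B ∧ (A * B)ᵀ = A * B ∧ (B * A)ᵀ = B * A
  then h.choose else 0

/-- `μ` is a representing measure on `ℝ` for the sequence `(β 0, …, β n)`. -/
def IsRepMeas (β : ℕ → ℝ) (n : ℕ) (μ : Measure ℝ) : Prop :=
  (∀ i ≤ n, Integrable (fun x : ℝ => x ^ i) μ) ∧ (∀ i ≤ n, β i = ∫ x : ℝ, x ^ i ∂μ)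

/-- `μ` is an `r`-atomic measure. -/
def IsAtomicM {α : Type*} [MeasurableSpace α] (μ : Measure α) (r : ℕ) : Prop :=
  ∃ (x : Fin r → α) (c : Fin r → ℝ), Function.Injective x ∧ (∀ ℓ, 0 < c ℓ) ∧
    μ = ∑ ℓ : Fin r, (ENNReal.ofReal (c ℓ)) • Measure.dirac (x ℓ)

/-- `(β 0, …, β n)` has a representing measure on `ℝ`. -/
def HasRep (β : ℕ → ℝ) (n : ℕ) : Prop := ∃ μ : Measure ℝ, IsRepMeas β n μ

/-- `(β 0, …, β n)` has an `r`-atomic representing measure on `ℝ`. -/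
def HasAtomicRep (β : ℕ → ℝ) (n r : ℕ) : Prop :=
  ∃ μ : Measure ℝ, IsRepMeas β n μ ∧ IsAtomicM μ r

/-- The partial Hankel matrix of `(β 0, …, β 2k)`, with the entries at positions `(i, j)`
with `i + j ∈ miss` unspecified, is partially positive semidefinite: every fully specified
principal submatrix is positive semidefinite. -/
def PartialPSD (β : ℕ → ℝ) (k : ℕ) (miss : Set ℕ) : Prop :=
  ∀ S : Finset (Fin (k + 1)),
    (∀ i ∈ S, ∀ j ∈ S, ((i : ℕ) + (j : ℕ)) ∉ miss) →
    Matrix.PosSemidef ((Hmat β 0 k).submatrix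
      (fun a : S => (a : Fin (k + 1))) (fun a : S => (a : Fin (k + 1))))

/-- The bordered matrix `[[A, vᵀ],[v, c]]`. -/
def borderB {n : Type*} [Fintype n] (A : Matrix n n ℝ) (v : n → ℝ) (c : ℝ) :
    Matrix (n ⊕ Unit) (n ⊕ Unit) ℝ :=
  Matrix.fromBlocks A (Matrix.of fun i _ => v i) (Matrix.of fun _ j => v j)
    (Matrix.of fun _ _ => c)

/-- The bordered matrix `[[c, v],[vᵀ, A]]`. -/
def borderT {n : Type*} [Fintype n] (c : ℝ) (v : n → ℝ) (A : Matrix n n ℝ) :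
    Matrix (Unit ⊕ n) (Unit ⊕ n) ℝ :=
  Matrix.fromBlocks (Matrix.of fun _ _ => c) (Matrix.of fun _ j => v j)
    (Matrix.of fun i _ => v i) A


section RankBorderAux

open Matrix

lemma finrank_submodule_prod {M M' : Type*} [AddCommGroup M] [AddCommGroup M']
    [Module ℝ M] [Module ℝ M'] [FiniteDimensional ℝ M] [FiniteDimensional ℝ M']
    (p : Submodule ℝ M) (q : Submodule ℝ M') :
    Module.finrank ℝ (p.prod q) = Module.finrank ℝ p + Module.finrank ℝ q := by
  have e : (p.prod q) ≃ₗ[ℝ] p × q :=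
    { toFun := fun x => (⟨x.1.1, x.2.1⟩, ⟨x.1.2, x.2.2⟩)
      invFun := fun x => ⟨(x.1.1, x.2.1), ⟨x.1.2, x.2.2⟩⟩
      map_add' := fun x y => rfl
      map_smul' := fun r x => rfl
      left_inv := fun x => rfl
      right_inv := fun x => rfl }
  rw [e.finrank_eq, Module.finrank_prod]

lemma range_prodMap' {M M' N N' : Type*} [AddCommGroup M] [AddCommGroup M']
    [AddCommGroup N] [AddCommGroup N']
    [Module ℝ M] [Module ℝ M'] [Module ℝ N] [Module ℝ N']
    (f : M →ₗ[ℝ] N) (g : M' →ₗ[ℝ] N') :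
    LinearMap.range (f.prodMap g) = (LinearMap.range f).prod (LinearMap.range g) := by
  ext ⟨a, b⟩
  simp only [LinearMap.mem_range, Submodule.mem_prod, Prod.ext_iff, LinearMap.prodMap_apply]
  constructor
  · rintro ⟨⟨x, y⟩, hx, hy⟩; exact ⟨⟨x, hx⟩, ⟨y, hy⟩⟩
  · rintro ⟨⟨x, hx⟩, ⟨y, hy⟩⟩; exact ⟨(x, y), hx, hy⟩

lemma rank_blockDiag {m k : Type*} [Fintype m] [Fintype k] [DecidableEq m] [DecidableEq k]
    (A : Matrix m m ℝ) (D : Matrix k k ℝ) :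
    (fromBlocks A 0 0 D).rank = A.rank + D.rank := by
  classical
  set e := LinearEquiv.sumArrowLequivProdArrow m k ℝ ℝ
  have key : (fromBlocks A 0 0 D).mulVecLin
      = e.symm.toLinearMap ∘ₗ (A.mulVecLin.prodMap D.mulVecLin) ∘ₗ e.toLinearMap := by
    apply LinearMap.ext; intro x
    funext i
    cases i <;>
      simp [e, Matrix.fromBlocks_mulVec, LinearEquiv.sumArrowLequivProdArrow,
        Matrix.mulVecLin_apply, Equiv.sumArrowEquivProdArrow]
  rw [Matrix.rank, key]
  rw [LinearMap.range_comp, LinearMap.range_comp, LinearEquiv.range, Submodule.map_top]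
  rw [range_prodMap', LinearEquiv.finrank_map_eq, finrank_submodule_prod]
  rfl

lemma exists_penrose {n : ℕ} (A : Matrix (Fin n) (Fin n) ℝ) (hA : A.IsHermitian) :
    ∃ B : Matrix (Fin n) (Fin n) ℝ,
      A * B * A = A ∧ B * A * B = B ∧ (A * B)ᵀ = A * B ∧ (B * A)ᵀ = B * A := by
  classical
  set U : Matrix (Fin n) (Fin n) ℝ := ↑hA.eigenvectorUnitary
  set d : Fin n → ℝ := RCLike.ofReal ∘ hA.eigenvalues with hd
  have hUU : star U * U = 1 := mem_unitaryGroup_iff'.mp hA.eigenvectorUnitary.2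
  have hspec : A = U * diagonal d * star U := hA.spectral_theorem
  set g : Fin n → ℝ := fun i => if d i = 0 then 0 else (d i)⁻¹ with hg
  have hmul : ∀ v w : Fin n → ℝ,
      (U * diagonal v * star U) * (U * diagonal w * star U)
        = U * diagonal (v * w) * star U := by
    intro v w
    simp only [Matrix.mul_assoc]
    rw [← Matrix.mul_assoc (star U) U, hUU, Matrix.one_mul,
      ← Matrix.mul_assoc (diagonal v) (diagonal w), diagonal_mul_diagonal]
    rfl
  have htrans : ∀ v : Fin n → ℝ, (U * diagonal v * star U)ᵀ = U * diagonal v * star U := by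
    intro v
    have h1 : (diagonal v : Matrix (Fin n) (Fin n) ℝ)ᴴ = diagonal v := by
      simp [diagonal_conjTranspose]
    rw [← conjTranspose_eq_transpose_of_trivial, conjTranspose_mul, conjTranspose_mul, h1,
      ← star_eq_conjTranspose U, ← star_eq_conjTranspose (star U), star_star]
    simp [Matrix.mul_assoc]
  have h1 : d * g * d = d := by
    funext i
    by_cases h : d i = 0 <;> simp [hg, Pi.mul_apply, h]
  have h2 : g * d * g = g := by
    funext i
    by_cases h : d i = 0 <;> simp [hg, Pi.mul_apply, h]
  refine ⟨U * diagonal g * star U, ?_, ?_, ?_, ?_⟩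
  · rw [hspec, hmul, hmul, h1]
  · rw [hspec, hmul, hmul, h2]
  · rw [hspec, hmul, htrans]
  · rw [hspec, hmul, htrans]

lemma pinv_spec {n : ℕ} (A : Matrix (Fin n) (Fin n) ℝ) (hA : A.IsSymm) :
    A * pinv A * A = A ∧ pinv A * A * pinv A = pinv A ∧
      (A * pinv A)ᵀ = A * pinv A ∧ (pinv A * A)ᵀ = pinv A * A := by
  have h := exists_penrose A (by rwa [Matrix.IsHermitian, conjTranspose_eq_transpose_of_trivial])
  rw [pinv, dif_pos h]
  exact h.choose_spec

lemma quad_eval {n : ℕ} (A : Matrix (Fin n) (Fin n) ℝ) (b : Fin n → ℝ) (c : ℝ)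
    (u : Fin n → ℝ) (t : ℝ) :
    star (Sum.elim u (fun _ => t)) ⬝ᵥ (borderB A b c *ᵥ Sum.elim u (fun _ => t))
      = u ⬝ᵥ A *ᵥ u + t * (u ⬝ᵥ b) + t * (b ⬝ᵥ u) + c * t ^ 2 := by
  rw [star_trivial]
  rw [show (borderB A b c) *ᵥ (Sum.elim u fun _ => t)
      = Sum.elim (A *ᵥ u + t • b) (fun _ => b ⬝ᵥ u + c * t) from ?_]
  · rw [sumElim_dotProduct_sumElim, dotProduct_add, dotProduct_smul]
    simp [dotProduct]
    ring
  · rw [borderB, fromBlocks_mulVec]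
    funext i
    cases i with
    | inl i => simp [mulVec, dotProduct, mul_comm]
    | inr u' => simp [mulVec, dotProduct]

lemma ker_orth {n : ℕ} {A : Matrix (Fin n) (Fin n) ℝ} {b : Fin n → ℝ} {c : ℝ}
    (hM : (borderB A b c).PosSemidef) {x : Fin n → ℝ} (hx : A *ᵥ x = 0) :
    b ⬝ᵥ x = 0 := by
  rw [dotProduct_comm]
  by_contra hb
  set β := x ⬝ᵥ b with hβ
  set t : ℝ := (-c - 1) / (2 * β) with ht
  have h := hM.dotProduct_mulVec_nonneg (Sum.elim (t • x) (fun _ => (1 : ℝ)))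
  rw [quad_eval] at h
  have h1 : A *ᵥ (t • x) = 0 := by rw [mulVec_smul, hx, smul_zero]
  rw [h1] at h
  have h2 : (t • x) ⬝ᵥ b = t * β := by rw [smul_dotProduct, smul_eq_mul, hβ]
  have h3 : b ⬝ᵥ (t • x) = t * β := by rw [dotProduct_smul, smul_eq_mul, dotProduct_comm, hβ]
  rw [h2, h3, dotProduct_zero] at h
  have h2β : 2 * β ≠ 0 := by
    simp only [mul_ne_zero_iff]
    exact ⟨two_ne_zero, hb⟩
  have htβ : t * β = (-c - 1) / 2 := by
    rw [ht]; field_simp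
  rw [htβ] at h
  norm_num at h
  linarith

lemma mulVec_pinv_mulVec {n : ℕ} {A : Matrix (Fin n) (Fin n) ℝ} (hA : A.IsSymm)
    {b : Fin n → ℝ} {c : ℝ} (hM : (borderB A b c).PosSemidef)
    (h1 : A * pinv A * A = A) (h3 : (A * pinv A)ᵀ = A * pinv A) :
    A *ᵥ (pinv A *ᵥ b) = b := by
  set B := pinv A with hB
  have key : A * (A * B) = A := by
    calc A * (A * B) = A * (A * B)ᵀ := by rw [h3]
      _ = (A * B * Aᵀ)ᵀ := by
            rw [transpose_mul (A * B) Aᵀ, transpose_transpose]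
      _ = (A * B * A)ᵀ := by rw [hA.eq]
      _ = Aᵀ := by rw [h1]
      _ = A := hA.eq
  set y := B *ᵥ b with hy
  set r := b - A *ᵥ y with hr
  have hAr : A *ᵥ r = 0 := by
    rw [hr, mulVec_sub, hy, mulVec_mulVec, mulVec_mulVec, Matrix.mul_assoc, key, sub_self]
  have hbr : b ⬝ᵥ r = 0 := ker_orth hM hAr
  have hyr : r ⬝ᵥ (A *ᵥ y) = 0 := by
    rw [dotProduct_mulVec, ← mulVec_transpose, hA.eq, hAr, zero_dotProduct]
  have hrr : r ⬝ᵥ r = 0 := by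
    calc r ⬝ᵥ r = (b - A *ᵥ y) ⬝ᵥ r := by rw [hr]
      _ = b ⬝ᵥ r - (A *ᵥ y) ⬝ᵥ r := by rw [sub_dotProduct]
      _ = 0 := by rw [hbr, dotProduct_comm (A *ᵥ y) r, hyr, sub_zero]
  have hr0 : r = 0 := by
    rwa [dotProduct_self_eq_zero] at hrr
  have h0 : b - A *ᵥ y = 0 := hr ▸ hr0
  rw [hy] at h0
  exact (sub_eq_zero.mp h0).symm

end RankBorderAux

/-- For a psd bordered matrix `M = [[A, b],[bᵀ, c]]`, `rank M = rank A` iff the generalized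
Schur complement `M/A = c - bᵀ A⁺ b` is zero; otherwise `rank M = rank A + 1`. -/
theorem rank_border_psd {n : ℕ} (A : Matrix (Fin n) (Fin n) ℝ) (hA : A.IsSymm)
    (b : Fin n → ℝ) (c : ℝ) (hM : (borderB A b c).PosSemidef) :
    ((borderB A b c).rank = A.rank ↔ c - b ⬝ᵥ (pinv A) *ᵥ b = 0) ∧
    (c - b ⬝ᵥ (pinv A) *ᵥ b ≠ 0 → (borderB A b c).rank = A.rank + 1) := by
  classical
  obtain ⟨h1, h2, h3, h4⟩ := pinv_spec A hA
  have hy : A *ᵥ (pinv A *ᵥ b) = b := mulVec_pinv_mulVec hA hM h1 h3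
  set y := pinv A *ᵥ b with hydef
  set s := c - b ⬝ᵥ y with hs
  set Y : Matrix Unit (Fin n) ℝ := Matrix.of fun _ j => y j with hY
  set L : Matrix (Fin n ⊕ Unit) (Fin n ⊕ Unit) ℝ := fromBlocks 1 0 Y 1 with hL
  set S : Matrix Unit Unit ℝ := Matrix.of fun _ _ => s with hS
  set N : Matrix (Fin n ⊕ Unit) (Fin n ⊕ Unit) ℝ := fromBlocks A 0 0 S with hN
  have hLt : Lᵀ = fromBlocks 1 Yᵀ 0 1 := by
    rw [hL, fromBlocks_transpose, transpose_one, transpose_one, transpose_zero]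
  have hAY : A * Yᵀ = Matrix.of fun i (_ : Unit) => b i := by
    ext i u
    have h := congrFun hy i
    simp only [mulVec, dotProduct] at h
    simpa [Matrix.mul_apply, hY] using h
  have hYA : Y * A = Matrix.of fun (_ : Unit) j => b j := by
    have hYAt : Y * A = (A * Yᵀ)ᵀ := by
      rw [transpose_mul, transpose_transpose, hA.eq]
    rw [hYAt, hAY]
    ext u j
    rfl
  have h22 : (Matrix.of fun (_ : Unit) j => b j) * Yᵀ + S
      = (Matrix.of fun (_ : Unit) (_ : Unit) => c) := by
    ext u u'
    simp only [Matrix.add_apply, Matrix.mul_apply, Matrix.of_apply, hY, hS, hs,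
      transpose_apply]
    have hbd : ∑ i, b i * y i = b ⬝ᵥ y := rfl
    rw [hbd]
    ring
  have hfact : borderB A b c = L * N * Lᵀ := by
    rw [hLt, hL, hN, fromBlocks_multiply, fromBlocks_multiply]
    simp only [Matrix.mul_one, Matrix.one_mul, Matrix.mul_zero, Matrix.zero_mul,
      add_zero, zero_add]
    rw [hAY, hYA, h22, borderB]
  have hdetL : IsUnit L.det := by
    rw [hL, det_fromBlocks_zero₁₂, det_one, det_one, mul_one]
    exact isUnit_one
  have hdetLt : IsUnit Lᵀ.det := by rwa [det_transpose]
  have hrank : (borderB A b c).rank = A.rank + S.rank := by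
    rw [hfact, Matrix.mul_assoc, rank_mul_eq_right_of_isUnit_det _ _ hdetL,
      rank_mul_eq_left_of_isUnit_det _ _ hdetLt, hN, rank_blockDiag]
  by_cases hs0 : s = 0
  · have hS0 : S = 0 := by
      ext u u'
      simp [hS, hs0]
    rw [hS0, Matrix.rank_zero, add_zero] at hrank
    constructor
    · rw [hrank]
      simpa [hs] using hs0
    · intro hne
      exact absurd (by simpa [hs] using hs0) hne
  · have hSdet : IsUnit S.det := by
      rw [Matrix.det_unique]
      exact (isUnit_iff_ne_zero).mpr (by simpa [hS] using hs0)
    have hSrank : S.rank = 1 := by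
      rw [Matrix.rank_of_isUnit S ((Matrix.isUnit_iff_isUnit_det S).mpr hSdet)]
      simp
    rw [hSrank] at hrank
    constructor
    · constructor
      · intro hr
        rw [hrank] at hr
        omega
      · intro hzero
        exact absurd (by simpa [hs] using hzero) hs0
    · intro _
      exact hrank


end
end

section
/- Let K = [[A, B, D],[Bᵀ, C, E],[Dᵀ, Eᵀ, F]] be a real symmetric block matrix of size n₁+n₂+n₃, where A, C, F are real symmetric matrices of sizes n₁, n₂, n₃ and B, D, E are real matrices of sizes n₁×n₂, n₁×n₃, n₂×n₃. Write M = [[A, B],[Bᵀ, C]] and N = [[C, E],[Eᵀ, F]]. (i) If M and A are nonsingular, then K/M = ([[A,D],[Dᵀ,F]]/A) − ([[A,B],[Dᵀ,Eᵀ]]/A) · (M/A)⁻¹ · ([[A,D],[Bᵀ,E]]/A). (ii) If N and C are nonsingular, then K/N = ([[C,Bᵀ],[B,A]]/C) − ([[C,E],[B,D]]/C) · (N/C)⁻¹ · ([[C,Bᵀ],[Eᵀ,Dᵀ]]/C). -/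
open Matrix

noncomputable section

attribute [local instance] Classical.propDecidable

lemma pinv_eq_inv {n : Type*} [Fintype n] [DecidableEq n] (A : Matrix n n ℝ)
    (hA : IsUnit A.det) : pinv A = A⁻¹ := by
  have hinv : A * A⁻¹ = 1 := mul_nonsing_inv A hA
  have hinv' : A⁻¹ * A = 1 := nonsing_inv_mul A hA
  have h : ∃ B : Matrix n n ℝ,
      A * B * A = A ∧ B * A * B = B ∧ (A * B)ᵀ = A * B ∧ (B * A)ᵀ = B * A :=
    ⟨A⁻¹, by simp [hinv, hinv'], by simp [hinv, hinv'], by simp [hinv], by simp [hinv']⟩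
  have hc := h.choose_spec
  have : h.choose = A⁻¹ := by
    have h1 : A * h.choose * A = A := hc.1
    calc h.choose = (A⁻¹ * A) * h.choose * (A * A⁻¹) := by simp [hinv, hinv']
      _ = A⁻¹ * (A * h.choose * A) * A⁻¹ := by noncomm_ring
      _ = A⁻¹ := by rw [h1]; rw [Matrix.mul_assoc, hinv, Matrix.mul_one]
  rw [pinv, dif_pos h, this]

lemma schur_aux {n₁ n₂ n₃ : Type*}
    [Fintype n₁] [Fintype n₂] [Fintype n₃]
    [DecidableEq n₁] [DecidableEq n₂] [DecidableEq n₃]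
    (A : Matrix n₁ n₁ ℝ) (B : Matrix n₁ n₂ ℝ) (B' : Matrix n₂ n₁ ℝ) (C : Matrix n₂ n₂ ℝ)
    (D : Matrix n₁ n₃ ℝ) (D' : Matrix n₃ n₁ ℝ) (E : Matrix n₂ n₃ ℝ) (E' : Matrix n₃ n₂ ℝ)
    (F : Matrix n₃ n₃ ℝ)
    (hM : IsUnit (fromBlocks A B B' C).det) (hA : IsUnit A.det) :
    F - fromCols D' E' * (fromBlocks A B B' C)⁻¹ * fromRows D E =
      (F - D' * A⁻¹ * D) -
        (E' - D' * A⁻¹ * B) * (C - B' * A⁻¹ * B)⁻¹ * (E - B' * A⁻¹ * D) := by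
  letI iA : Invertible A := A.invertibleOfIsUnitDet hA
  letI iM : Invertible (fromBlocks A B B' C) := (fromBlocks A B B' C).invertibleOfIsUnitDet hM
  letI iS : Invertible (C - B' * ⅟A * B) := invertibleOfFromBlocks₁₁Invertible A B B' C
  have hS : (C - B' * ⅟A * B) = C - B' * A⁻¹ * B := by rw [invOf_eq_nonsing_inv]
  letI iS' : Invertible (C - B' * A⁻¹ * B) := hS ▸ iS
  rw [← invOf_eq_nonsing_inv (fromBlocks A B B' C), invOf_fromBlocks₁₁_eq,
    fromCols_mul_fromBlocks, fromCols_mul_fromRows]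
  simp only [invOf_eq_nonsing_inv]
  generalize (C - B' * A⁻¹ * B)⁻¹ = S
  simp only [Matrix.sub_mul, Matrix.mul_sub, Matrix.add_mul, Matrix.mul_add, Matrix.neg_mul,
    Matrix.mul_neg, Matrix.mul_assoc]
  abel

/-- Quotient formulas for the generalized Schur complements of the upper left-hand `2×2` block
`M = [[A, B],[Bᵀ, C]]` and of the lower right-hand `2×2` block `N = [[C, E],[Eᵀ, F]]` in the
symmetric `3×3` block matrix `K = [[A, B, D],[Bᵀ, C, E],[Dᵀ, Eᵀ, F]]`. -/
theorem schur_quotient_formula {n₁ n₂ n₃ : Type*}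
    [Fintype n₁] [Fintype n₂] [Fintype n₃]
    [DecidableEq n₁] [DecidableEq n₂] [DecidableEq n₃]
    (A : Matrix n₁ n₁ ℝ) (C : Matrix n₂ n₂ ℝ) (F : Matrix n₃ n₃ ℝ)
    (B : Matrix n₁ n₂ ℝ) (D : Matrix n₁ n₃ ℝ) (E : Matrix n₂ n₃ ℝ)
    (hA : A.IsSymm) (hC : C.IsSymm) (hF : F.IsSymm) :
    (IsUnit (Matrix.fromBlocks A B Bᵀ C).det → IsUnit A.det →
      F - (Matrix.of fun (i : n₃) (j : n₁ ⊕ n₂) =>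
            Sum.elim (fun a => Dᵀ i a) (fun c => Eᵀ i c) j) *
          pinv (Matrix.fromBlocks A B Bᵀ C) *
          (Matrix.of fun (i : n₁ ⊕ n₂) (j : n₃) =>
            Sum.elim (fun a => D a j) (fun c => E c j) i) =
        (F - Dᵀ * pinv A * D) -
          (Eᵀ - Dᵀ * pinv A * B) * (C - Bᵀ * pinv A * B)⁻¹ * (E - Bᵀ * pinv A * D)) ∧
    (IsUnit (Matrix.fromBlocks C E Eᵀ F).det → IsUnit C.det →
      A - (Matrix.of fun (i : n₁) (j : n₂ ⊕ n₃) =>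
            Sum.elim (fun c => B i c) (fun f => D i f) j) *
          pinv (Matrix.fromBlocks C E Eᵀ F) *
          (Matrix.of fun (i : n₂ ⊕ n₃) (j : n₁) =>
            Sum.elim (fun c => Bᵀ c j) (fun f => Dᵀ f j) i) =
        (A - B * pinv C * Bᵀ) -
          (D - B * pinv C * E) * (F - Eᵀ * pinv C * E)⁻¹ * (Dᵀ - Eᵀ * pinv C * Bᵀ)) := by
  constructor
  · intro hM hA'
    have e1 : (Matrix.of fun (i : n₃) (j : n₁ ⊕ n₂) =>
        Sum.elim (fun a => Dᵀ i a) (fun c => Eᵀ i c) j) = fromCols Dᵀ Eᵀ := by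
      ext i (j | j) <;> rfl
    have e2 : (Matrix.of fun (i : n₁ ⊕ n₂) (j : n₃) =>
        Sum.elim (fun a => D a j) (fun c => E c j) i) = fromRows D E := by
      ext (i | i) j <;> rfl
    rw [e1, e2, pinv_eq_inv _ hM, pinv_eq_inv _ hA']
    exact schur_aux A B Bᵀ C D Dᵀ E Eᵀ F hM hA'
  · intro hN hC'
    have e1 : (Matrix.of fun (i : n₁) (j : n₂ ⊕ n₃) =>
        Sum.elim (fun c => B i c) (fun f => D i f) j) = fromCols B D := by
      ext i (j | j) <;> rfl
    have e2 : (Matrix.of fun (i : n₂ ⊕ n₃) (j : n₁) =>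
        Sum.elim (fun c => Bᵀ c j) (fun f => Dᵀ f j) i) = fromRows Bᵀ Dᵀ := by
      ext (i | i) j <;> rfl
    rw [e1, e2, pinv_eq_inv _ hN, pinv_eq_inv _ hC']
    exact schur_aux C E Eᵀ F Bᵀ B Dᵀ D A hN hC'
  
end
end

section
/- Let k ∈ ℕ, let β = (β_0,…,β_{2k}) be a real sequence such that the Hankel matrix A_β is positive semidefinite and singular, let β̃ = (β_0,…,β_{2k−2}) and r = rank β̃. Then r = rank β = rank A_β(r−1) = rank A_β(r) = … = rank A_β(k−1) = rank A_{β̃}. -/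
open Matrix MeasureTheory

noncomputable section

attribute [local instance] Classical.propDecidable

namespace RCA

/-- kernel condition in ℕ-land -/
def KerN (β : ℕ → ℝ) (m : ℕ) (z : ℕ → ℝ) : Prop :=
  ∀ ℓ ≤ m, ∑ j ∈ Finset.range (m + 1), β (j + ℓ) * z j = 0

variable {β : ℕ → ℝ} {k : ℕ}

lemma mulVec_apply (m : ℕ) (z : ℕ → ℝ) (ℓ : Fin (m + 1)) :
    (Hmat β 0 m).mulVec (fun j : Fin (m + 1) => z j) ℓ
      = ∑ j ∈ Finset.range (m + 1), β (j + ℓ) * z j := by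
  simp only [Hmat, Matrix.mulVec, dotProduct, Matrix.of_apply]
  rw [← Fin.sum_univ_eq_sum_range (fun j => β (j + (ℓ : ℕ)) * z j)]
  refine Finset.sum_congr rfl fun j _ => ?_
  congr 2
  omega

lemma kerN_iff (m : ℕ) (z : ℕ → ℝ) :
    KerN β m z ↔ (Hmat β 0 m).mulVec (fun j : Fin (m + 1) => z j) = 0 := by
  constructor
  · intro h
    funext ℓ
    rw [mulVec_apply, Pi.zero_apply]
    exact h ℓ (Nat.lt_succ_iff.mp ℓ.isLt)
  · intro h ℓ hℓ
    have := congrFun h ⟨ℓ, by omega⟩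
    rwa [mulVec_apply, Pi.zero_apply] at this

lemma psd_kerN (hpsd : (Hmat β 0 k).PosSemidef) (z : ℕ → ℝ)
    (h : ∀ ℓ ≤ k, z ℓ = 0 ∨ ∑ j ∈ Finset.range (k + 1), β (j + ℓ) * z j = 0) :
    KerN β k z := by
  rw [kerN_iff]
  rw [← hpsd.dotProduct_mulVec_zero_iff]
  have : star (fun j : Fin (k + 1) => z j) = fun j : Fin (k + 1) => z j := by
    funext j; simp
  rw [this]
  rw [dotProduct]
  refine Finset.sum_eq_zero fun ℓ _ => ?_
  rcases h ℓ (Nat.lt_succ_iff.mp ℓ.isLt) with h0 | h0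
  · simp [h0]
  · rw [mulVec_apply, h0, mul_zero]

lemma kerN_mono {m n : ℕ} (hmn : m ≤ n) (z : ℕ → ℝ) (hz : ∀ j, m < j → z j = 0)
    (h : KerN β n z) : KerN β m z := by
  intro ℓ hℓ
  have h2 := h ℓ (hℓ.trans hmn)
  rw [← Finset.sum_subset (Finset.range_subset_range.mpr (by omega : m + 1 ≤ n + 1))
    (fun x _ hx => by rw [hz x (by simpa using hx), mul_zero])] at h2
  exact h2

lemma kerN_pad (hpsd : (Hmat β 0 k).PosSemidef) {m : ℕ} (hmk : m ≤ k) (z : ℕ → ℝ)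
    (hz : ∀ j, m < j → z j = 0) (h : KerN β m z) : KerN β k z := by
  refine psd_kerN hpsd z fun ℓ hℓ => ?_
  by_cases hm : ℓ ≤ m
  · right
    rw [← Finset.sum_subset (Finset.range_subset_range.mpr (by omega : m + 1 ≤ k + 1))
      (fun x _ hx => by rw [hz x (by simpa using hx), mul_zero])]
    exact h ℓ hm
  · exact Or.inl (hz ℓ (by omega))

lemma kerN_shift (hpsd : (Hmat β 0 k).PosSemidef) (hk : 1 ≤ k) (z : ℕ → ℝ)
    (hz : ∀ j, k - 1 ≤ j → z j = 0) (h : KerN β k z) :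
    KerN β k (fun j => if j = 0 then 0 else z (j - 1)) := by
  refine psd_kerN hpsd _ fun ℓ hℓ => ?_
  rcases eq_or_lt_of_le hℓ with rfl | hℓk
  · left
    simp only [if_neg (by omega : ¬ ℓ = 0)]
    exact hz _ (by omega)
  · right
    rw [Finset.sum_range_succ']
    simp only [Nat.succ_ne_zero, if_false, eq_self_iff_true, if_true, Nat.add_sub_cancel,
      mul_zero, add_zero]
    have hzk : z k = 0 := hz k (by omega)
    calc ∑ i ∈ Finset.range k, β (i + 1 + ℓ) * z i
        = ∑ i ∈ Finset.range (k + 1), β (i + (ℓ + 1)) * z i := by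
          rw [Finset.sum_range_succ, hzk, mul_zero, add_zero]
          exact Finset.sum_congr rfl fun i _ => by ring_nf
      _ = 0 := h (ℓ + 1) (by omega)


lemma himg (m i : ℕ) :
    Hcol β 0 m '' Set.Iio i = Set.range (fun j : Fin i => Hcol β 0 m j) := by
  ext x
  constructor
  · rintro ⟨j, hj, rfl⟩; exact ⟨⟨j, hj⟩, rfl⟩
  · rintro ⟨j, rfl⟩; exact ⟨j, j.isLt, rfl⟩

lemma ker_to_mem {m t : ℕ} (z : ℕ → ℝ) (ht : t ≤ m) (hzt : z t ≠ 0)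
    (hz : ∀ j, t < j → z j = 0) (h : KerN β m z) :
    Hcol β 0 m t ∈ Submodule.span ℝ (Hcol β 0 m '' Set.Iio t) := by
  rw [himg, Submodule.mem_span_range_iff_exists_fun]
  refine ⟨fun j => -(z j) / z t, ?_⟩
  funext ℓ
  have h1 := h ℓ (Nat.lt_succ_iff.mp ℓ.isLt)
  rw [← Finset.sum_subset (Finset.range_subset_range.mpr (by omega : t + 1 ≤ m + 1))
    (fun x _ hx => by rw [hz x (by simpa using hx), mul_zero])] at h1
  rw [Finset.sum_range_succ] at h1
  have h2 : ∑ j ∈ Finset.range t, β (j + ℓ) * z j = -(β (t + ℓ) * z t) := by linarith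
  have h3 : Hcol β 0 m t ℓ = β (t + ℓ) := by simp [Hcol]
  calc (∑ j : Fin t, (-(z j) / z t) • Hcol β 0 m j) ℓ
      = ∑ j : Fin t, (-(z (j : ℕ)) / z t) * β ((j : ℕ) + ℓ) := by
        rw [Finset.sum_apply]
        refine Finset.sum_congr rfl fun j _ => ?_
        simp [Hcol]
    _ = ∑ j ∈ Finset.range t, (-(z j) / z t) * β (j + ℓ) := by
        exact Fin.sum_univ_eq_sum_range (fun j => -z j / z t * β (j + (ℓ : ℕ))) t
    _ = (-(1:ℝ) / z t) * ∑ j ∈ Finset.range t, β (j + ℓ) * z j := by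
        rw [Finset.mul_sum]
        refine Finset.sum_congr rfl fun j _ => by ring
    _ = Hcol β 0 m t ℓ := by rw [h2, h3]; field_simp

lemma sum_comb {n p r : ℕ} (hp : p < n) (hrn : r ≤ n) (hrp : r ≤ p) (c : Fin r → ℝ) (f : ℕ → ℝ) :
    ∑ j ∈ Finset.range n, f j * (if j = p then 1 else if h : j < r then -(c ⟨j, h⟩) else 0)
      = f p - ∑ j : Fin r, c j * f j := by
  have hz : ∀ j, (if j = p then (1:ℝ) else if h : j < r then -(c ⟨j, h⟩) else 0)
      = (if j = p then 1 else 0) + (if h : j < r then -(c ⟨j, h⟩) else 0) := by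
    intro j
    rcases eq_or_ne j p with rfl | hne
    · rw [if_pos rfl, if_pos rfl, dif_neg (by omega)]; ring
    · rw [if_neg hne, if_neg hne, zero_add]
  simp only [hz, mul_add, Finset.sum_add_distrib]
  have e1 : ∑ j ∈ Finset.range n, f j * (if j = p then (1:ℝ) else 0) = f p := by
    rw [Finset.sum_eq_single p]
    · rw [if_pos rfl, mul_one]
    · intro b _ hb; rw [if_neg hb, mul_zero]
    · intro hb; exact absurd (Finset.mem_range.mpr hp) hb
  have e2 : ∑ j ∈ Finset.range n, f j * (if h : j < r then -(c ⟨j, h⟩) else 0)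
      = -∑ j : Fin r, c j * f j := by
    rw [← Finset.sum_subset (Finset.range_subset_range.mpr hrn)
      (fun x _ hx => by rw [dif_neg (by simpa using hx), mul_zero])]
    rw [← Fin.sum_univ_eq_sum_range (fun j => f j * (if h : j < r then -(c ⟨j, h⟩) else 0)) r]
    rw [← Finset.sum_neg_distrib]
    refine Finset.sum_congr rfl fun j _ => ?_
    rw [dif_pos j.isLt]
    simp only [Fin.eta]
    ring
  rw [e1, e2]; ring

lemma mem_to_ker {m i : ℕ} (hi : i ≤ m)
    (h : Hcol β 0 m i ∈ Submodule.span ℝ (Hcol β 0 m '' Set.Iio i)) :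
    ∃ z : ℕ → ℝ, z i = 1 ∧ (∀ j, i < j → z j = 0) ∧ KerN β m z := by
  rw [himg, Submodule.mem_span_range_iff_exists_fun] at h
  obtain ⟨c, hc⟩ := h
  refine ⟨fun j => if j = i then 1 else if h : j < i then -(c ⟨j, h⟩) else 0,
    by simp, fun j hj => by simp only [if_neg (by omega : ¬ j = i), dif_neg (by omega : ¬ j < i)], ?_⟩
  intro ℓ hℓ
  rw [sum_comb (by omega) (by omega) le_rfl c (fun j => β (j + ℓ))]
  have h2 : ∑ j : Fin i, c j * β ((j : ℕ) + ℓ) = β (i + ℓ) := by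
    have := congrFun hc ⟨ℓ, by omega⟩
    rw [Finset.sum_apply] at this
    simpa [Hcol] using this
  rw [h2, sub_self]

lemma exists_dep {m : ℕ} (z : ℕ → ℝ) (hne : ∃ j, j ≤ m ∧ z j ≠ 0) (hz : ∀ j, m < j → z j = 0)
    (h : KerN β m z) :
    ∃ t, t ≤ m ∧ z t ≠ 0 ∧ Hcol β 0 m t ∈ Submodule.span ℝ (Hcol β 0 m '' Set.Iio t) := by
  obtain ⟨j0, hj0m, hj0⟩ := hne
  set t := Nat.findGreatest (fun j => z j ≠ 0) m with htdef
  have htm : t ≤ m := Nat.findGreatest_le m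
  have hzt : z t ≠ 0 := Nat.findGreatest_spec (P := fun j => z j ≠ 0) hj0m hj0
  have hgt : ∀ j, t < j → z j = 0 := by
    intro j hj
    by_cases hjm : j ≤ m
    · by_contra h0
      exact Nat.findGreatest_is_greatest hj hjm h0
    · exact hz j (by omega)
  exact ⟨t, htm, hzt, ker_to_mem z htm hzt hgt h⟩

lemma trunc_mem {m n i r : ℕ} (hmn : m ≤ n)
    (h : Hcol β 0 n i ∈ Submodule.span ℝ (Set.range (fun j : Fin r => Hcol β 0 n j))) :
    Hcol β 0 m i ∈ Submodule.span ℝ (Set.range (fun j : Fin r => Hcol β 0 m j)) := by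
  let T : ((Fin (n+1) → ℝ) →ₗ[ℝ] (Fin (m+1) → ℝ)) :=
    LinearMap.funLeft ℝ ℝ (Fin.castLE (by omega))
  have hT : ∀ j : ℕ, T (Hcol β 0 n j) = Hcol β 0 m j := by
    intro j; funext ℓ; rfl
  have h2 : T (Hcol β 0 n i) ∈ Submodule.map T
      (Submodule.span ℝ (Set.range fun j : Fin r => Hcol β 0 n ↑j)) :=
    Submodule.mem_map_of_mem h
  rw [Submodule.map_span, ← Set.range_comp] at h2
  have h3 : (T ∘ fun j : Fin r => Hcol β 0 n ↑j) = fun j : Fin r => Hcol β 0 m ↑j :=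
    funext fun j => hT j
  rw [h3, hT i] at h2
  exact h2

end RCA

/-- If the Hankel matrix `A_β` of `(β 0, …, β (2k))` is psd and singular, and
`r = rank (β 0, …, β (2k-2))`, then
`r = rank β = rank A_β(r-1) = … = rank A_β(k-1) = rank A_{β̃}`. -/
theorem rank_chain_psd_singular (k : ℕ) (hk : 1 ≤ k) (β : ℕ → ℝ)
    (hpsd : (Hmat β 0 k).PosSemidef) (hsing : ¬ IsUnit (Hmat β 0 k).det) :
    seqRank β 0 k = seqRank β 0 (k - 1) ∧
    (∀ m : ℕ, seqRank β 0 (k - 1) - 1 ≤ m → m ≤ k - 1 →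
      (Hmat β 0 m).rank = seqRank β 0 (k - 1)) := by
  classical
  set S : Set ℕ :=
    {i : ℕ | Hcol β 0 k i ∈ Submodule.span ℝ (Hcol β 0 k '' Set.Iio i)} with hSdef
  set r : ℕ := sInf S with hrdef
  have hdet : (Hmat β 0 k).det = 0 := by
    by_contra h; exact hsing (isUnit_iff_ne_zero.mpr h)
  have hkanz : ∃ t, t ≤ k ∧ t ∈ S := by
    obtain ⟨v, hv0, hv⟩ := (Matrix.exists_mulVec_eq_zero_iff).mpr hdet
    set z : ℕ → ℝ := fun j => if h : j < k + 1 then v ⟨j, h⟩ else 0 with hzdef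
    have hveq : (fun j : Fin (k + 1) => z j) = v := by
      funext j; exact dif_pos j.isLt
    have hker : RCA.KerN β k z := (RCA.kerN_iff k z).mpr (by rw [hveq]; exact hv)
    obtain ⟨a, ha⟩ := Function.ne_iff.mp hv0
    have hza : z a ≠ 0 := by rw [hzdef]; simpa [a.isLt] using ha
    obtain ⟨t, htk, hzt, htS⟩ := RCA.exists_dep z ⟨a, Nat.lt_succ_iff.mp a.isLt, hza⟩
      (fun j hj => dif_neg (by omega)) hker
    exact ⟨t, htk, htS⟩
  obtain ⟨t0, ht0k, ht0S⟩ := hkanz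
  have hSne : S.Nonempty := ⟨t0, ht0S⟩
  have hrS : r ∈ S := Nat.sInf_mem hSne
  have hrk : r ≤ k := le_trans (Nat.sInf_le ht0S) ht0k
  have hmin : ∀ i, i < r → i ∉ S := fun i hi => Nat.notMem_of_lt_sInf hi
  have hinv : ∀ r1, r = r1 + 1 → IsUnit (Hmat β 0 r1).det := by
    intro r1 hr1
    rw [isUnit_iff_ne_zero]
    intro hdet0
    obtain ⟨v, hv0, hv⟩ := (Matrix.exists_mulVec_eq_zero_iff).mpr hdet0
    set z : ℕ → ℝ := fun j => if h : j < r1 + 1 then v ⟨j, h⟩ else 0 with hzdef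
    have hveq : (fun j : Fin (r1 + 1) => z j) = v := by funext j; exact dif_pos j.isLt
    have hzsupp : ∀ j, r1 < j → z j = 0 := fun j hj => dif_neg (by omega)
    have hker : RCA.KerN β r1 z := (RCA.kerN_iff r1 z).mpr (by rw [hveq]; exact hv)
    have hkerk : RCA.KerN β k z := RCA.kerN_pad hpsd (by omega) z hzsupp hker
    obtain ⟨a, ha⟩ := Function.ne_iff.mp hv0
    have hza : z a ≠ 0 := by rw [hzdef]; simpa [a.isLt] using ha
    obtain ⟨t, htk, hzt, htS⟩ := RCA.exists_dep z ⟨a, by have := a.isLt; omega, hza⟩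
      (fun j hj => hzsupp j (by omega)) hkerk
    have htr : t ≤ r1 := by by_contra h0; exact hzt (hzsupp t (by omega))
    exact hmin t (by omega) htS
  have Q : ∀ i, i ≤ k - 1 →
      Hcol β 0 k i ∈ Submodule.span ℝ (Set.range (fun j : Fin r => Hcol β 0 k j)) := by
    intro i
    induction i using Nat.strong_induction_on with
    | _ i IH =>
      intro hik
      rcases lt_trichotomy i r with hir | rfl | hir
      · exact Submodule.subset_span ⟨⟨i, hir⟩, rfl⟩
      · rw [← RCA.himg]
        exact hrS
      · obtain ⟨p, rfl⟩ : ∃ p, i = p + 1 := ⟨i - 1, by omega⟩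
        have hrp : r ≤ p := by omega
        have hmem := IH p (by omega) (by omega)
        rw [Submodule.mem_span_range_iff_exists_fun] at hmem
        obtain ⟨c, hc⟩ := hmem
        set z : ℕ → ℝ :=
          fun j => if j = p then 1 else if h : j < r then -(c ⟨j, h⟩) else 0 with hzdef
        have hker : RCA.KerN β k z := by
          intro ℓ hℓ
          rw [hzdef]
          rw [RCA.sum_comb (by omega) (by omega) hrp c (fun j => β (j + ℓ))]
          have h2 : ∑ j : Fin r, c j * β ((j : ℕ) + ℓ) = β (p + ℓ) := by
            have := congrFun hc ⟨ℓ, by omega⟩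
            rw [Finset.sum_apply] at this
            simpa [Hcol] using this
          rw [h2, sub_self]
        have hsupp : ∀ j, k - 1 ≤ j → z j = 0 := by
          intro j hj
          rw [hzdef]
          simp only [if_neg (by omega : ¬ j = p), dif_neg (by omega : ¬ j < r)]
        have hker' := RCA.kerN_shift hpsd hk z hsupp hker
        have hmem2 := RCA.ker_to_mem (m := k) (t := p + 1)
          (fun j => if j = 0 then 0 else z (j - 1)) (by omega)
          (by simp [hzdef])
          (fun j hj => by
            simp only [if_neg (by omega : ¬ j = 0)]
            rw [hzdef]
            simp only [if_neg (by omega : ¬ j - 1 = p), dif_neg (by omega : ¬ j - 1 < r)])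
          hker'
        refine Submodule.span_le.mpr ?_ hmem2
        rintro x ⟨j, hj, rfl⟩
        have hj' : j < p + 1 := hj
        exact IH j (by omega) (by omega)
  have hseqk : seqRank β 0 k = r := by
    rw [seqRank, if_neg hsing]
  have hseqk1 : seqRank β 0 (k - 1) = r := by
    rw [seqRank]
    split_ifs with hu
    · by_contra hne
      have hrk1 : r ≤ k - 1 := by omega
      obtain ⟨z, hz1, hzsupp, hzker⟩ := RCA.mem_to_ker hrk hrS
      have hker1 : RCA.KerN β (k - 1) z :=
        RCA.kerN_mono (by omega) z (fun j hj => hzsupp j (by omega)) hzker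
      have hvker := (RCA.kerN_iff (k - 1) z).mp hker1
      have hvne : (fun j : Fin (k - 1 + 1) => z j) ≠ 0 := by
        intro h0
        have h1 := congrFun h0 ⟨r, by omega⟩
        simp only [Pi.zero_apply] at h1
        rw [hz1] at h1
        exact one_ne_zero h1
      exact isUnit_iff_ne_zero.mp hu
        ((Matrix.exists_mulVec_eq_zero_iff).mp ⟨_, hvne, hvker⟩)
    · have hdet1 : (Hmat β 0 (k - 1)).det = 0 := by
        by_contra h; exact hu (isUnit_iff_ne_zero.mpr h)
      have hrk1 : r ≤ k - 1 := by
        obtain ⟨v, hv0, hv⟩ := (Matrix.exists_mulVec_eq_zero_iff).mpr hdet1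
        set z : ℕ → ℝ := fun j => if h : j < k - 1 + 1 then v ⟨j, h⟩ else 0 with hzdef
        have hveq : (fun j : Fin (k - 1 + 1) => z j) = v := by
          funext j; exact dif_pos j.isLt
        have hzsupp : ∀ j, k - 1 < j → z j = 0 := fun j hj => dif_neg (by omega)
        have hker : RCA.KerN β (k - 1) z := (RCA.kerN_iff _ z).mpr (by rw [hveq]; exact hv)
        have hkerk : RCA.KerN β k z := RCA.kerN_pad hpsd (by omega) z hzsupp hker
        obtain ⟨a, ha⟩ := Function.ne_iff.mp hv0
        have hza : z a ≠ 0 := by rw [hzdef]; simpa [a.isLt] using ha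
        obtain ⟨t, htk, hzt, htS⟩ := RCA.exists_dep z ⟨a, by have := a.isLt; omega, hza⟩
          (fun j hj => hzsupp j (by omega)) hkerk
        have htr : t ≤ k - 1 := by by_contra h0; exact hzt (hzsupp t (by omega))
        have hrt : r ≤ t := le_of_not_gt fun h0 => hmin t h0 htS
        omega
      obtain ⟨z, hz1, hzsupp, hzker⟩ := RCA.mem_to_ker hrk hrS
      have hker1 : RCA.KerN β (k - 1) z :=
        RCA.kerN_mono (by omega) z (fun j hj => hzsupp j (by omega)) hzker
      have hrS' : Hcol β 0 (k - 1) r ∈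
          Submodule.span ℝ (Hcol β 0 (k - 1) '' Set.Iio r) :=
        RCA.ker_to_mem z hrk1 (by rw [hz1]; exact one_ne_zero) hzsupp hker1
      have hmin' : ∀ i ∈ {i : ℕ | Hcol β 0 (k - 1) i ∈
          Submodule.span ℝ (Hcol β 0 (k - 1) '' Set.Iio i)}, r ≤ i := by
        intro i hi
        by_contra h0
        push_neg at h0
        obtain ⟨w, hw1, hwsupp, hwker⟩ := RCA.mem_to_ker (by omega : i ≤ k - 1) hi
        have hwk : RCA.KerN β k w :=
          RCA.kerN_pad hpsd (by omega) w (fun j hj => hwsupp j (by omega)) hwker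
        have : i ∈ S := RCA.ker_to_mem w (by omega) (by rw [hw1]; exact one_ne_zero) hwsupp hwk
        exact hmin i h0 this
      refine le_antisymm (Nat.sInf_le hrS') ?_
      by_contra h0
      push_neg at h0
      have hne : Set.Nonempty {i : ℕ | Hcol β 0 (k - 1) i ∈
          Submodule.span ℝ (Hcol β 0 (k - 1) '' Set.Iio i)} := ⟨r, hrS'⟩
      exact absurd (hmin' _ (Nat.sInf_mem hne)) (by omega)
  refine ⟨by rw [hseqk, hseqk1], ?_⟩
  intro m hm1 hm2
  rw [hseqk1] at hm1 ⊢
  have hub : (Hmat β 0 m).rank ≤ r := by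
    rw [Matrix.rank_eq_finrank_span_cols]
    have hsub : Set.range (Hmat β 0 m)ᵀ ⊆
        ↑(Submodule.span ℝ (Set.range (fun j : Fin r => Hcol β 0 m j))) := by
      rintro x ⟨i, rfl⟩
      have hxi : (Hmat β 0 m)ᵀ i = Hcol β 0 m i := by
        funext ℓ
        show β (0 + ℓ + i) = β (0 + i + ℓ)
        congr 1
        omega
      rw [hxi]
      exact RCA.trunc_mem (by omega) (Q i (by have := i.isLt; omega))
    calc Module.finrank ℝ (Submodule.span ℝ (Set.range (Hmat β 0 m)ᵀ))
        ≤ Module.finrank ℝ (Submodule.span ℝ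
            (Set.range (fun j : Fin r => Hcol β 0 m j))) :=
          Submodule.finrank_mono (Submodule.span_le.mpr hsub)
      _ ≤ Fintype.card (Fin r) := finrank_range_le_card _
      _ = r := Fintype.card_fin r
  have hlb : r ≤ (Hmat β 0 m).rank := by
    rcases Nat.eq_zero_or_pos r with hr0 | hrpos
    · omega
    obtain ⟨r1, hr1⟩ : ∃ r1, r = r1 + 1 := ⟨r - 1, by omega⟩
    have hu : IsUnit (Hmat β 0 r1).det := hinv r1 hr1
    have h1 : (Hmat β 0 r1).rank = r1 + 1 := by
      rw [Matrix.rank_of_isUnit _ ((Matrix.isUnit_iff_isUnit_det _).mpr hu)]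
      simp
    have hr1m : r1 ≤ m := by omega
    have h2 : (Hmat β 0 r1).rank ≤ (Hmat β 0 m).rank := by
      rw [Matrix.rank_eq_finrank_span_cols, Matrix.rank_eq_finrank_span_cols]
      show Module.finrank ℝ (Submodule.span ℝ (Set.range (Hmat β 0 r1)ᵀ)) ≤
        Module.finrank ℝ (Submodule.span ℝ (Set.range (Hmat β 0 m)ᵀ))
      let T : ((Fin (m + 1) → ℝ) →ₗ[ℝ] (Fin (r1 + 1) → ℝ)) :=
        LinearMap.funLeft ℝ ℝ (Fin.castLE (by omega))
      have key : Set.range (Hmat β 0 r1)ᵀ =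
          T '' Set.range (fun j : Fin (r1 + 1) => Hcol β 0 m (j : ℕ)) := by
        rw [← Set.range_comp]
        refine congrArg Set.range (funext fun j => ?_)
        funext ℓ
        show β (0 + ℓ + j) = β (0 + j + ℓ)
        congr 1
        omega
      rw [key, ← Submodule.map_span]
      calc Module.finrank ℝ ((Submodule.span ℝ
              (Set.range fun j : Fin (r1 + 1) => Hcol β 0 m (j : ℕ))).map T)
          ≤ Module.finrank ℝ (Submodule.span ℝ
              (Set.range fun j : Fin (r1 + 1) => Hcol β 0 m (j : ℕ))) :=
            Submodule.finrank_map_le T _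
        _ ≤ Module.finrank ℝ (Submodule.span ℝ (Set.range (Hmat β 0 m)ᵀ)) := by
            refine Submodule.finrank_mono (Submodule.span_le.mpr ?_)
            rintro x ⟨j, rfl⟩
            have : Hcol β 0 m (j : ℕ) = (Hmat β 0 m)ᵀ ⟨(j : ℕ), by omega⟩ := by
              funext ℓ
              show β (0 + j + ℓ) = β (0 + ℓ + j)
              congr 1
              omega
            show Hcol β 0 m (j : ℕ) ∈ ↑(Submodule.span ℝ (Set.range (Hmat β 0 m)ᵀ))
            rw [this]
            exact Submodule.subset_span ⟨_, rfl⟩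
    omega
  omega


end
end

section
/- Let k ∈ ℕ, let β = (β_0,…,β_{2k}) be a real sequence such that the Hankel matrix A_β is positive semidefinite and singular, let β^{(rev)} = (β_{2k},β_{2k−1},…,β_0), β̃^{(rev)} = (β_{2k},…,β_2), and r = rank β̃^{(rev)}. Then r = rank β^{(rev)} = rank A_β[r−1] = rank A_β[r] = … = rank A_β[k−1] = rank A_{β̃^{(rev)}}. -/
open Matrix MeasureTheory

noncomputable section

attribute [local instance] Classical.propDecidable

private lemma range_fin_eq_image {N : Type*} (v : ℕ → N) (n : ℕ) :
    Set.range (fun i : Fin n => v i) = v '' Set.Iio n := by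
  ext x
  constructor
  · rintro ⟨i, rfl⟩; exact ⟨i, i.isLt, rfl⟩
  · rintro ⟨j, hj, rfl⟩; exact ⟨⟨j, hj⟩, rfl⟩

private lemma li_aux {N : Type*} [AddCommGroup N] [Module ℝ N] (v : ℕ → N) :
    ∀ n : ℕ, (∀ i, i < n → v i ∉ Submodule.span ℝ (v '' Set.Iio i)) →
      LinearIndependent ℝ (fun i : Fin n => v i) := by
  intro n
  induction n with
  | zero => intro _; exact linearIndependent_empty_type
  | succ n ih =>
    intro h
    have hsnoc : (fun i : Fin (n+1) => v ↑i) = Fin.snoc (fun i : Fin n => v ↑i) (v n) := by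
      funext i
      induction i using Fin.lastCases with
      | last => simp
      | cast i => simp
    rw [hsnoc, linearIndependent_fin_snoc]
    exact ⟨ih (fun i hi => h i (by omega)),
      by rw [range_fin_eq_image]; exact h n (by omega)⟩

private def combo (γ : ℕ → ℝ) (k : ℕ) (c : ℕ → ℝ) (m : ℕ) : Fin (k+1) → ℝ :=
  ∑ p ∈ Finset.range m, c p • Hcol γ 0 k p

private lemma mem_span_iff_combo (γ : ℕ → ℝ) (k r : ℕ) (x : Fin (k+1) → ℝ) :
    x ∈ Submodule.span ℝ (Hcol γ 0 k '' Set.Iio r) ↔ ∃ c : ℕ → ℝ, combo γ k c r = x := by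
  rw [← range_fin_eq_image, Submodule.mem_span_range_iff_exists_fun]
  constructor
  · rintro ⟨c, rfl⟩
    refine ⟨fun p => if h : p < r then c ⟨p, h⟩ else 0, ?_⟩
    rw [combo, ← Fin.sum_univ_eq_sum_range
      (fun p => (if h : p < r then c ⟨p, h⟩ else 0) • Hcol γ 0 k p) r]
    exact Finset.sum_congr rfl fun i _ => by simp
  · rintro ⟨c, rfl⟩
    exact ⟨fun i => c i, by
      rw [combo, ← Fin.sum_univ_eq_sum_range (fun p => c p • Hcol γ 0 k p) r]⟩

private lemma combo_eq_mulVec (γ : ℕ → ℝ) (k : ℕ) (c : ℕ → ℝ) (m : ℕ) (hm : m ≤ k + 1) :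
    ∃ w : Fin (k+1) → ℝ, (∀ ℓ : Fin (k+1), m ≤ ℓ.val → w ℓ = 0) ∧
      (Hmat γ 0 k).mulVec w = combo γ k c m := by
  refine ⟨fun ℓ => if ℓ.val < m then c ℓ.val else 0,
    fun ℓ hℓ => by simp [Nat.not_lt.mpr hℓ], ?_⟩
  funext i
  show ∑ ℓ : Fin (k+1), Hmat γ 0 k i ℓ * _ = _
  have e1 : ∀ ℓ : Fin (k+1), Hmat γ 0 k i ℓ * (if ℓ.val < m then c ℓ.val else 0)
      = (fun t : ℕ => γ (0 + ↑i + t) * (if t < m then c t else 0)) ℓ.val := fun ℓ => rfl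
  rw [Finset.sum_congr rfl (fun ℓ _ => e1 ℓ),
    Fin.sum_univ_eq_sum_range (fun t => γ (0 + ↑i + t) * (if t < m then c t else 0)) (k+1)]
  rw [← Finset.sum_subset (Finset.range_subset_range.mpr hm)
    (fun t _ ht => by simp [Finset.mem_range.not.mp ht])]
  have e2 : combo γ k c m i = ∑ t ∈ Finset.range m, c t * γ (0 + t + ↑i) := by
    simp [combo, Finset.sum_apply, Hcol]
  rw [e2]
  refine Finset.sum_congr rfl fun t ht => ?_
  rw [if_pos (Finset.mem_range.mp ht), show 0 + (i : ℕ) + t = 0 + t + ↑i by omega, mul_comm]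

private lemma psd_cancel (γ : ℕ → ℝ) (k : ℕ) (hpsd : (Hmat γ 0 k).PosSemidef)
    (w : Fin (k+1) → ℝ) (h : ∀ ℓ, w ℓ * (Hmat γ 0 k).mulVec w ℓ = 0) :
    (Hmat γ 0 k).mulVec w = 0 := by
  apply (hpsd.dotProduct_mulVec_zero_iff w).mp
  show star w ⬝ᵥ _ = 0
  have hsw : star w = w := by funext ℓ; simp
  rw [hsw]
  exact Finset.sum_eq_zero (fun ℓ _ => h ℓ)

private lemma trunc_inj (γ : ℕ → ℝ) (k m : ℕ) (hpsd : (Hmat γ 0 k).PosSemidef) (hm : m ≤ k)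
    (x : Fin (k+1) → ℝ) (hx : x ∈ Submodule.span ℝ (Hcol γ 0 k '' Set.Iio (m+1)))
    (h0 : ∀ ℓ : Fin (k+1), ℓ.val ≤ m → x ℓ = 0) : x = 0 := by
  obtain ⟨c, rfl⟩ := (mem_span_iff_combo γ k (m+1) _).mp hx
  obtain ⟨w, hw, hBw⟩ := combo_eq_mulVec γ k c (m+1) (by omega)
  rw [← hBw]
  apply psd_cancel γ k hpsd
  intro ℓ
  rcases le_or_gt ℓ.val m with h | h
  · rw [hBw, h0 ℓ h, mul_zero]
  · rw [hw ℓ (by omega), zero_mul]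


/-- Reversed-sequence rank chain: if the Hankel matrix of `(β 0, …, β (2k))` is psd and
singular, and `r = rank (β (2k), …, β 2)`, then `r = rank β^{(rev)}` and equals the ranks of
the lower right-hand corners `A_β[r-1], …, A_β[k-1]` and of `A_{β̃^{(rev)}}`. -/
theorem rank_chain_reversed (k : ℕ) (hk : 1 ≤ k) (β : ℕ → ℝ)
    (hpsd : (Hmat β 0 k).PosSemidef) (hsing : ¬ IsUnit (Hmat β 0 k).det) :
    seqRank (fun m => β (2 * k - m)) 0 k = seqRank (fun m => β (2 * k - m)) 0 (k - 1) ∧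
    (∀ m : ℕ, seqRank (fun m' => β (2 * k - m')) 0 (k - 1) - 1 ≤ m → m ≤ k - 1 →
      (Hmat β (2 * (k - m)) m).rank = seqRank (fun m' => β (2 * k - m')) 0 (k - 1)) ∧
    (Hmat (fun m => β (2 * k - m)) 0 (k - 1)).rank =
      seqRank (fun m => β (2 * k - m)) 0 (k - 1) := by
  obtain ⟨k', rfl⟩ : ∃ k', k = k' + 1 := ⟨k - 1, by omega⟩
  set γ : ℕ → ℝ := fun m => β (2 * (k' + 1) - m) with hγ
  -- the reversed Hankel matrix is psd and singular
  have hBA : Hmat γ 0 (k' + 1) =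
      (Hmat β 0 (k' + 1)).submatrix Fin.revPerm Fin.revPerm := by
    ext i j
    have hi := i.isLt
    have hj := j.isLt
    simp only [Hmat, Matrix.of_apply, Matrix.submatrix_apply, Fin.revPerm_apply,
      Fin.val_rev, hγ]
    congr 1
    omega
  have hpsdB : (Hmat γ 0 (k' + 1)).PosSemidef := by
    rw [hBA]; exact hpsd.submatrix _
  have hsingB : ¬ IsUnit (Hmat γ 0 (k' + 1)).det := by
    rw [hBA, Matrix.det_submatrix_equiv_self]; exact hsing
  -- columns of the reversed Hankel matrix
  have hcolsB : (Hmat γ 0 (k' + 1))ᵀ =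
      fun j : Fin (k' + 1 + 1) => Hcol γ 0 (k' + 1) ↑j := by
    funext j i
    simp only [Hmat, Hcol, Matrix.transpose_apply, Matrix.of_apply]
    congr 1
    omega
  set S : Set ℕ :=
    {i : ℕ | Hcol γ 0 (k' + 1) i ∈
      Submodule.span ℝ (Hcol γ 0 (k' + 1) '' Set.Iio i)} with hS
  have hex : ∃ j, j ∈ S ∧ j ≤ k' + 1 := by
    by_contra hcon
    push_neg at hcon
    have hind : LinearIndependent ℝ (fun i : Fin (k' + 1 + 1) => Hcol γ 0 (k' + 1) ↑i) :=
      li_aux _ _ (fun i hi hmem => absurd (hcon i hmem) (by omega))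
    exact hsingB ((Matrix.isUnit_iff_isUnit_det _).mp
      (Matrix.linearIndependent_cols_iff_isUnit.mp (by unfold Matrix.col; rw [hcolsB]; exact hind)))
  set r : ℕ := sInf S with hr
  obtain ⟨j₀, hj₀S, hj₀le⟩ := hex
  clear_value r
  have hrS : r ∈ S := by rw [hr]; exact Nat.sInf_mem ⟨j₀, hj₀S⟩
  have hrk : r ≤ k' + 1 := le_trans (hr ▸ Nat.sInf_le hj₀S) hj₀le
  have hlow : ∀ i, i < r → i ∉ S := fun i hi => Nat.notMem_of_lt_sInf (hr ▸ hi)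
  set W : Submodule ℝ (Fin (k' + 1 + 1) → ℝ) :=
    Submodule.span ℝ (Hcol γ 0 (k' + 1) '' Set.Iio r) with hW
  have hli : LinearIndependent ℝ (fun i : Fin r => Hcol γ 0 (k' + 1) ↑i) :=
    li_aux _ _ (fun i hi hmem => hlow i hi hmem)
  have hfinW : Module.finrank ℝ W = r := by
    rw [hW, ← range_fin_eq_image, finrank_span_eq_card hli, Fintype.card_fin]
  have hvW : ∀ p, p ≤ r → Hcol γ 0 (k' + 1) p ∈ W := by
    intro p hp
    rcases lt_or_eq_of_le hp with h | h
    · exact Submodule.subset_span ⟨p, h, rfl⟩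
    · subst h; exact hrS
  have hshift : ∀ (p : ℕ) (ℓ : Fin (k' + 1 + 1)) (h : ℓ.val + 1 < k' + 1 + 1),
      Hcol γ 0 (k' + 1) (p + 1) ℓ = Hcol γ 0 (k' + 1) p ⟨ℓ.val + 1, h⟩ := by
    intro p ℓ h
    simp only [Hcol]
    congr 1
    omega
  -- propagation of column relations
  have hprop : ∀ j, j ≤ k' → Hcol γ 0 (k' + 1) j ∈ W := by
    have key : ∀ j, r ≤ j → j ≤ k' → Hcol γ 0 (k' + 1) j ∈ W := by
      intro j hrj
      induction j, hrj using Nat.le_induction with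
      | base => intro _; exact hrS
      | succ j hj ih =>
        intro hjk
        have hjW : Hcol γ 0 (k' + 1) j ∈ W := ih (by omega)
        obtain ⟨c, hc⟩ := (mem_span_iff_combo γ (k' + 1) r _).mp hjW
        set d : ℕ → ℝ := fun p => (if p = j + 1 then 1 else 0) -
          (if p = 0 then 0 else if p - 1 < r then c (p - 1) else 0) with hd
        have hxval : combo γ (k' + 1) d (j + 2) = Hcol γ 0 (k' + 1) (j + 1) -
            ∑ i ∈ Finset.range r, c i • Hcol γ 0 (k' + 1) (i + 1) := by
          rw [combo]
          have hsplit : ∀ p ∈ Finset.range (j + 2), d p • Hcol γ 0 (k' + 1) p =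
              (if p = j + 1 then Hcol γ 0 (k' + 1) p else 0) -
              (if p = 0 then (0:ℝ) else if p - 1 < r then c (p - 1) else 0)
                • Hcol γ 0 (k' + 1) p := by
            intro p _
            rw [hd, sub_smul]
            congr 1
            split <;> simp
          rw [Finset.sum_congr rfl hsplit, Finset.sum_sub_distrib]
          congr 1
          · rw [Finset.sum_ite_eq' (Finset.range (j + 2)) (j + 1) (Hcol γ 0 (k' + 1)),
              if_pos (by simp)]
          · rw [← Finset.sum_subset
              (Finset.range_subset_range.mpr (show r + 1 ≤ j + 2 by omega))
              (fun p _ hp => by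
                have hp' : r + 1 ≤ p := by have := Finset.mem_range.not.mp hp; omega
                rw [if_neg (by omega), if_neg (by omega), zero_smul])]
            rw [Finset.sum_range_succ' (fun p =>
              (if p = 0 then (0:ℝ) else if p - 1 < r then c (p - 1) else 0)
                • Hcol γ 0 (k' + 1) p) r]
            rw [if_pos rfl, zero_smul, add_zero]
            refine Finset.sum_congr rfl fun i hi => ?_
            have hilt := Finset.mem_range.mp hi
            rw [if_neg (by omega)]
            simp only [Nat.add_sub_cancel]
            rw [if_pos hilt]
        obtain ⟨w, hw, hBw⟩ := combo_eq_mulVec γ (k' + 1) d (j + 2) (by omega)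
        have hcoord : ∀ ℓ : Fin (k' + 1 + 1), ℓ.val < k' + 1 →
            combo γ (k' + 1) d (j + 2) ℓ = 0 := by
          intro ℓ hℓ
          have hℓ1 : ℓ.val + 1 < k' + 1 + 1 := by omega
          have hcℓ := congrFun hc (⟨ℓ.val + 1, hℓ1⟩ : Fin (k' + 1 + 1))
          rw [combo] at hcℓ
          simp only [Finset.sum_apply, Pi.smul_apply, smul_eq_mul] at hcℓ
          rw [hxval]
          simp only [Pi.sub_apply, Finset.sum_apply, Pi.smul_apply, smul_eq_mul]
          rw [hshift j ℓ hℓ1]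
          rw [show (∑ i ∈ Finset.range r, c i * Hcol γ 0 (k' + 1) (i + 1) ℓ) =
              ∑ i ∈ Finset.range r, c i * Hcol γ 0 (k' + 1) i ⟨ℓ.val + 1, hℓ1⟩ from
            Finset.sum_congr rfl fun i _ => by rw [hshift i ℓ hℓ1], hcℓ, sub_self]
        have hBw0 : (Hmat γ 0 (k' + 1)).mulVec w = 0 := by
          apply psd_cancel γ (k' + 1) hpsdB
          intro ℓ
          rcases lt_or_ge ℓ.val (k' + 1) with h | h
          · rw [hBw, hcoord ℓ h, mul_zero]
          · rw [hw ℓ (by omega), zero_mul]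
        have hrepr : Hcol γ 0 (k' + 1) (j + 1) =
            ∑ i ∈ Finset.range r, c i • Hcol γ 0 (k' + 1) (i + 1) :=
          sub_eq_zero.mp (by rw [← hxval, ← hBw]; exact hBw0)
        rw [hrepr]
        exact Submodule.sum_mem _ (fun i hi => Submodule.smul_mem _ _
          (hvW (i + 1) (by have := Finset.mem_range.mp hi; omega)))
    intro j hj
    rcases lt_or_ge j r with h | h
    · exact Submodule.subset_span ⟨j, h, rfl⟩
    · exact key j h hj
  -- rank of the leading principal corners
  have hcorner : ∀ (m : ℕ) (hm : m + 1 ≤ k' + 1 + 1), r ≤ m + 1 → m ≤ k' →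
      ((Hmat γ 0 (k' + 1)).submatrix (Fin.castLE hm) (Fin.castLE hm)).rank = r := by
    intro m hm hrm hmk
    have hVmW : Submodule.span ℝ (Hcol γ 0 (k' + 1) '' Set.Iio (m + 1)) = W := by
      apply le_antisymm
      · rw [Submodule.span_le]
        rintro x ⟨p, hp, rfl⟩
        have hp' : p < m + 1 := hp
        exact hprop p (by omega)
      · rw [hW, Submodule.span_le]
        rintro x ⟨p, hp, rfl⟩
        have hp' : p < r := hp
        exact Submodule.subset_span ⟨p, show p < m + 1 by omega, rfl⟩
    have hcols : ((Hmat γ 0 (k' + 1)).submatrix (Fin.castLE hm) (Fin.castLE hm))ᵀ =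
        fun j : Fin (m + 1) =>
          LinearMap.funLeft ℝ ℝ (Fin.castLE hm) (Hcol γ 0 (k' + 1) ↑j) := by
      funext j i
      simp only [Matrix.transpose_apply, Matrix.submatrix_apply, Hmat, Matrix.of_apply,
        LinearMap.funLeft_apply, Hcol, Fin.coe_castLE]
      congr 1
      omega
    rw [Matrix.rank_eq_finrank_span_cols]; unfold Matrix.col; rw [hcols]
    have hrange : Set.range (fun j : Fin (m + 1) =>
        LinearMap.funLeft ℝ ℝ (Fin.castLE hm) (Hcol γ 0 (k' + 1) ↑j)) =
        LinearMap.funLeft ℝ ℝ (Fin.castLE hm) ''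
          (Hcol γ 0 (k' + 1) '' Set.Iio (m + 1)) := by
      rw [← range_fin_eq_image (fun p => Hcol γ 0 (k' + 1) p) (m + 1), ← Set.range_comp]
      rfl
    rw [hrange, Submodule.span_image, hVmW]
    have hinj : ∀ x ∈ W, LinearMap.funLeft ℝ ℝ (Fin.castLE hm) x = 0 → x = 0 := by
      intro x hx h0
      apply trunc_inj γ (k' + 1) m hpsdB (by omega) x (by rw [hVmW]; exact hx)
      intro ℓ hℓ
      have h2 := congrFun h0 (⟨ℓ.val, by omega⟩ : Fin (m + 1))
      simp only [LinearMap.funLeft_apply, Pi.zero_apply] at h2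
      rwa [show Fin.castLE hm (⟨ℓ.val, by omega⟩ : Fin (m + 1)) = ℓ from Fin.ext rfl] at h2
    have hφ : Function.Injective
        ((LinearMap.funLeft ℝ ℝ (Fin.castLE hm)).comp W.subtype) := by
      rw [← LinearMap.ker_eq_bot, eq_bot_iff]
      rintro ⟨x, hx⟩ hker
      have hx0 : x = 0 := hinj x hx (LinearMap.mem_ker.mp hker)
      simpa [Submodule.mem_bot, Submodule.mk_eq_zero] using hx0
    have hmap : Submodule.map (LinearMap.funLeft ℝ ℝ (Fin.castLE hm)) W =
        LinearMap.range ((LinearMap.funLeft ℝ ℝ (Fin.castLE hm)).comp W.subtype) := by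
      rw [LinearMap.range_comp, Submodule.range_subtype]
    rw [hmap, LinearMap.finrank_range_of_inj hφ]
    exact hfinW
  -- the full reversed sequence rank
  have hseqfull : seqRank γ 0 (k' + 1) = r := by
    rw [seqRank, if_neg hsingB, ← hS, ← hr]
  -- the truncated Hankel matrix is the leading corner
  have hle : k' + 1 ≤ k' + 1 + 1 := by omega
  have hCsub : Hmat γ 0 k' =
      (Hmat γ 0 (k' + 1)).submatrix (Fin.castLE hle) (Fin.castLE hle) := by
    ext i j
    rfl
  have hrankC : (Hmat γ 0 k').rank = r := by
    rw [hCsub]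
    exact hcorner k' hle hrk le_rfl
  set π : (Fin (k' + 1 + 1) → ℝ) →ₗ[ℝ] (Fin (k' + 1) → ℝ) :=
    LinearMap.funLeft ℝ ℝ (Fin.castLE hle) with hπ
  have hcolT : ∀ p : ℕ, Hcol γ 0 k' p = π (Hcol γ 0 (k' + 1) p) := fun p => rfl
  have hfun : Hcol γ 0 k' = ⇑π ∘ Hcol γ 0 (k' + 1) := funext hcolT
  have hpush : ∀ i : ℕ, i ∈ S →
      Hcol γ 0 k' i ∈ Submodule.span ℝ (Hcol γ 0 k' '' Set.Iio i) := by
    intro i hi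
    rw [hfun, Set.image_comp, Submodule.span_image]
    exact Submodule.mem_map_of_mem hi
  have hpull : ∀ i : ℕ, i < r →
      Hcol γ 0 k' i ∉ Submodule.span ℝ (Hcol γ 0 k' '' Set.Iio i) := by
    intro i hir hmem
    rw [hfun, Set.image_comp, Submodule.span_image] at hmem
    obtain ⟨y, hy, hyeq⟩ := Submodule.mem_map.mp hmem
    have hπ0 : π (Hcol γ 0 (k' + 1) i - y) = 0 := by
      rw [map_sub, hyeq]
      exact sub_self _
    have hxW : Hcol γ 0 (k' + 1) i - y ∈
        Submodule.span ℝ (Hcol γ 0 (k' + 1) '' Set.Iio (k' + 1)) := by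
      apply Submodule.sub_mem
      · exact Submodule.subset_span ⟨i, show i < k' + 1 by omega, rfl⟩
      · exact Submodule.span_mono (Set.image_mono (Set.Iio_subset_Iio (by omega))) hy
    have hx0 : Hcol γ 0 (k' + 1) i - y = 0 := by
      apply trunc_inj γ (k' + 1) k' hpsdB (by omega) _ hxW
      intro ℓ hℓ
      have h2 := congrFun hπ0 (⟨ℓ.val, by omega⟩ : Fin (k' + 1))
      simp only [hπ, LinearMap.funLeft_apply, Pi.zero_apply] at h2
      rwa [show Fin.castLE hle (⟨ℓ.val, by omega⟩ : Fin (k' + 1)) = ℓ from Fin.ext rfl] at h2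
    exact hlow i hir (by
      show Hcol γ 0 (k' + 1) i ∈ Submodule.span ℝ (Hcol γ 0 (k' + 1) '' Set.Iio i)
      rw [sub_eq_zero.mp hx0]
      exact hy)
  have hseqtrunc : seqRank γ 0 k' = r := by
    by_cases hcase : r ≤ k'
    · have hsingC : ¬ IsUnit (Hmat γ 0 k').det := by
        intro hu
        have h1 := Matrix.rank_of_isUnit (Hmat γ 0 k')
          ((Matrix.isUnit_iff_isUnit_det _).mpr hu)
        rw [hrankC, Fintype.card_fin] at h1
        omega
      rw [seqRank, if_neg hsingC]
      have hrS' : r ∈ {i : ℕ | Hcol γ 0 k' i ∈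
          Submodule.span ℝ (Hcol γ 0 k' '' Set.Iio i)} := hpush r hrS
      apply le_antisymm
      · exact Nat.sInf_le hrS'
      · by_contra hlt
        push_neg at hlt
        exact hpull _ hlt (Nat.sInf_mem ⟨r, hrS'⟩)
    · have hreq : r = k' + 1 := by omega
      have hli2 : LinearIndependent ℝ (fun i : Fin (k' + 1) => Hcol γ 0 (k' + 1) ↑i) := by
        rw [hreq] at hli; exact hli
      have hdisj : Disjoint (Submodule.span ℝ (Set.range fun i : Fin (k' + 1) =>
          Hcol γ 0 (k' + 1) ↑i)) (LinearMap.ker π) := by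
        rw [Submodule.disjoint_def]
        intro x hx hker
        apply trunc_inj γ (k' + 1) k' hpsdB (by omega) x
          (by rwa [range_fin_eq_image] at hx)
        intro ℓ hℓ
        have h2 := congrFun (LinearMap.mem_ker.mp hker) (⟨ℓ.val, by omega⟩ : Fin (k' + 1))
        simp only [hπ, LinearMap.funLeft_apply, Pi.zero_apply] at h2
        rwa [show Fin.castLE hle (⟨ℓ.val, by omega⟩ : Fin (k' + 1)) = ℓ from Fin.ext rfl] at h2
      have hliC : LinearIndependent ℝ (fun j : Fin (k' + 1) => (Hmat γ 0 k')ᵀ j) := by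
        have hmapli := hli2.map hdisj
        have hcolsC : (fun j : Fin (k' + 1) => (Hmat γ 0 k')ᵀ j) =
            (⇑π ∘ fun i : Fin (k' + 1) => Hcol γ 0 (k' + 1) ↑i) := by
          funext j i
          simp only [Matrix.transpose_apply, Hmat, Matrix.of_apply, Function.comp_apply,
            hπ, LinearMap.funLeft_apply, Hcol, Fin.coe_castLE]
          congr 1
          omega
        rw [hcolsC]
        exact hmapli
      have hunit : IsUnit (Hmat γ 0 k').det :=
        (Matrix.isUnit_iff_isUnit_det _).mp (Matrix.linearIndependent_cols_iff_isUnit.mp hliC)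
      rw [seqRank, if_pos hunit, hreq]
  refine ⟨?_, ?_, ?_⟩
  · show seqRank γ 0 (k' + 1) = seqRank γ 0 k'
    rw [hseqfull, hseqtrunc]
  · intro m hm1 hm2
    replace hm1 : seqRank γ 0 k' - 1 ≤ m := hm1
    replace hm2 : m ≤ k' := hm2
    rw [hseqtrunc] at hm1
    have hmle : m + 1 ≤ k' + 1 + 1 := by omega
    have hrev : Hmat β (2 * (k' + 1 - m)) m =
        ((Hmat γ 0 (k' + 1)).submatrix (Fin.castLE hmle) (Fin.castLE hmle)).submatrix
          Fin.revPerm Fin.revPerm := by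
      ext i j
      have hi := i.isLt
      have hj := j.isLt
      simp only [Hmat, Matrix.of_apply, Matrix.submatrix_apply, Fin.revPerm_apply,
        Fin.coe_castLE, Fin.val_rev, hγ]
      congr 1
      omega
    show (Hmat β (2 * (k' + 1 - m)) m).rank = seqRank γ 0 k'
    rw [hrev, Matrix.rank_submatrix, hseqtrunc]
    exact hcorner m hmle (by omega) hm2
  · show (Hmat γ 0 k').rank = seqRank γ 0 k'
    rw [hrankC, hseqtrunc]


end
end
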